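/- Let n = 2M, let A be an invertible real n×n matrix, λ ∈ ℝᴹ with λ₁ ≠ 0, and L = A⁻¹(⊕ᵢ λᵢ K)A. Let Ψ : ℝⁿ → ℝᵐ satisfy Ψ(exp(sL)·x) = Ψ(x) for all s ∈ ℝ and all x ∈ ℝⁿ. Then there exists φ : ℝⁿ → ℝᵐ such that for every x ∈ ℝⁿ whose blocks v = Ax satisfy |v_{1,2}| < |v_{1,1}|, Ψ(x) = φ(invRep_h(x)). -/

import Mathlib

open Matrix NormedSpace

noncomputable section

/-- `R(t)`: the 2×2 rotation matrix. -/
def R2 (t : ℝ) : Matrix (Fin 2) (Fin 2) ℝ :=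
  !![Real.cos t, -Real.sin t; Real.sin t, Real.cos t]

/-- `H(t)`: the 2×2 hyperbolic rotation with rows (cosh t, sinh t), (sinh t, cosh t). -/
def Hyp (t : ℝ) : Matrix (Fin 2) (Fin 2) ℝ :=
  !![Real.cosh t, Real.sinh t; Real.sinh t, Real.cosh t]

/-- `G(t)`: the 2×2 shear with rows (1, t), (0, 1). -/
def Gm (t : ℝ) : Matrix (Fin 2) (Fin 2) ℝ := !![1, t; 0, 1]

/-- `J`: rows (0, -1), (1, 0). -/
def Jmat : Matrix (Fin 2) (Fin 2) ℝ := !![0, -1; 1, 0]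

/-- `K`: rows (0, 1), (1, 0). -/
def Kmat : Matrix (Fin 2) (Fin 2) ℝ := !![0, 1; 1, 0]

/-- `N`: rows (0, 1), (0, 0). -/
def Nmat : Matrix (Fin 2) (Fin 2) ℝ := !![0, 1; 0, 0]

/-- Index type for `ℝⁿ` with `n = 2M`: component `2(i-1)+p` of block `i` is indexed `(p, i)`. -/
abbrev Idx (M : ℕ) := Fin 2 × Fin M

/-- The block-diagonal matrix `⊕ᵢ Cᵢ`. -/
def bdiag {M : ℕ} (C : Fin M → Matrix (Fin 2) (Fin 2) ℝ) : Matrix (Idx M) (Idx M) ℝ :=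
  Matrix.blockDiagonal C

/-- The `i`-th 2-dimensional block `vᵢ` of a vector `v ∈ ℝⁿ`. -/
def blk {M : ℕ} (v : Idx M → ℝ) (i : Fin M) : Fin 2 → ℝ := fun p => v (p, i)

/-- Concatenation `u₁ ⊕ ⋯ ⊕ u_M` of 2-dimensional blocks. -/
def cat {M : ℕ} (u : Fin M → (Fin 2 → ℝ)) : Idx M → ℝ := fun pi => u pi.2 pi.1

/-- `e₁ = (1, 0) ∈ ℝ²`. -/
def e1 : Fin 2 → ℝ := ![1, 0]

/-- `e₂ = (0, 1) ∈ ℝ²`. -/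
def e2 : Fin 2 → ℝ := ![0, 1]

/-- The Euclidean norm `‖u‖₂` of `u ∈ ℝ²`. -/
def norm2 (u : Fin 2 → ℝ) : ℝ := Real.sqrt (u 0 ^ 2 + u 1 ^ 2)

/-- The inverse hyperbolic tangent. -/
def artanh (x : ℝ) : ℝ := Real.log ((1 + x) / (1 - x)) / 2

/-- `t₀` is valid for `x` (elliptic case): `R(t₀λ₁)e₁ = v₁/‖v₁‖₂` where `v = Ax`. -/
def validE {M : ℕ} [NeZero M] (A : Matrix (Idx M) (Idx M) ℝ) (lam : Fin M → ℝ)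
    (x : Idx M → ℝ) (t₀ : ℝ) : Prop :=
  (R2 (t₀ * lam 0)).mulVec e1 = (norm2 (blk (A.mulVec x) 0))⁻¹ • blk (A.mulVec x) 0

/-- `invRep_e(x; t₀) = ‖v₁‖₂ e₁ ⊕ R(−t₀λ₂)v₂ ⊕ ⋯ ⊕ R(−t₀λ_M)v_M`, where `v = Ax`. -/
def invRepE {M : ℕ} [NeZero M] (A : Matrix (Idx M) (Idx M) ℝ) (lam : Fin M → ℝ)
    (x : Idx M → ℝ) (t₀ : ℝ) : Idx M → ℝ :=
  cat (fun i =>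
    if i = 0 then norm2 (blk (A.mulVec x) 0) • e1
    else (R2 (-(t₀ * lam i))).mulVec (blk (A.mulVec x) i))

/-- The hyperbolic parameter `t₀ = artanh(v_{1,2}/v_{1,1})/λ₁`, where `v = Ax`. -/
def t0H {M : ℕ} [NeZero M] (A : Matrix (Idx M) (Idx M) ℝ) (lam : Fin M → ℝ)
    (x : Idx M → ℝ) : ℝ :=
  artanh (blk (A.mulVec x) 0 1 / blk (A.mulVec x) 0 0) / lam 0

/-- `invRep_h(x) = sgn(v_{1,1})√(v_{1,1}² − v_{1,2}²) e₁ ⊕ H(−t₀λ₂)v₂ ⊕ ⋯`, `v = Ax`. -/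
def invRepH {M : ℕ} [NeZero M] (A : Matrix (Idx M) (Idx M) ℝ) (lam : Fin M → ℝ)
    (x : Idx M → ℝ) : Idx M → ℝ :=
  cat (fun i =>
    if i = 0 then
      (Real.sign (blk (A.mulVec x) 0 0) *
        Real.sqrt (blk (A.mulVec x) 0 0 ^ 2 - blk (A.mulVec x) 0 1 ^ 2)) • e1
    else (Hyp (-(t0H A lam x * lam i))).mulVec (blk (A.mulVec x) i))

/-- The parabolic parameter `t₀ = v_{1,1}/(λ₁ v_{1,2})`, where `v = Ax`. -/
def t0P {M : ℕ} [NeZero M] (A : Matrix (Idx M) (Idx M) ℝ) (lam : Fin M → ℝ)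
    (x : Idx M → ℝ) : ℝ :=
  blk (A.mulVec x) 0 0 / (lam 0 * blk (A.mulVec x) 0 1)

/-- `invRep_p(x) = v_{1,2} e₂ ⊕ G(−t₀λ₂)v₂ ⊕ ⋯ ⊕ G(−t₀λ_M)v_M`, where `v = Ax`. -/
def invRepP {M : ℕ} [NeZero M] (A : Matrix (Idx M) (Idx M) ℝ) (lam : Fin M → ℝ)
    (x : Idx M → ℝ) : Idx M → ℝ :=
  cat (fun i =>
    if i = 0 then blk (A.mulVec x) 0 1 • e2
    else (Gm (-(t0P A lam x * lam i))).mulVec (blk (A.mulVec x) i))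

lemma P_unit : IsUnit (!![1, 1; 1, -1] : Matrix (Fin 2) (Fin 2) ℝ) := by
  apply Matrix.isUnit_iff_isUnit_det _ |>.mpr
  simp [Matrix.det_fin_two_of]
  norm_num

lemma P_inv : (!![1, 1; 1, -1] : Matrix (Fin 2) (Fin 2) ℝ)⁻¹ = !![1/2, 1/2; 1/2, -(1/2)] := by
  apply Matrix.inv_eq_right_inv
  ext i j; fin_cases i <;> fin_cases j <;>
    simp [Matrix.mul_apply, Fin.sum_univ_two] <;> norm_num

lemma conjP (t : ℝ) :
    t • Kmat = !![1, 1; 1, -1] * Matrix.diagonal ![t, -t] * (!![1, 1; 1, -1])⁻¹ := by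
  rw [P_inv]; ext i j; fin_cases i <;> fin_cases j <;>
    simp [Kmat, Matrix.mul_apply, Matrix.vecMul, dotProduct, Fin.sum_univ_two,
      Matrix.diagonal_apply, Matrix.vecHead, Matrix.vecTail] <;> ring

lemma conjP2 (t : ℝ) :
    !![1, 1; 1, -1] * Matrix.diagonal ![Real.exp t, Real.exp (-t)] * (!![1, 1; 1, -1])⁻¹
      = Hyp t := by
  rw [P_inv]; ext i j; fin_cases i <;> fin_cases j <;>
    simp [Hyp, Matrix.mul_apply, Matrix.vecMul, dotProduct, Fin.sum_univ_two,
      Matrix.diagonal_apply, Real.cosh_eq, Real.sinh_eq, Matrix.vecHead, Matrix.vecTail] <;> ring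

lemma exp_bdiagK {M : ℕ} (c : Fin M → ℝ) :
    exp (bdiag fun i => c i • Kmat) = bdiag fun i => Hyp (c i) := by
  classical
  have hPP : (!![1, 1; 1, -1] : Matrix (Fin 2) (Fin 2) ℝ) * (!![1, 1; 1, -1])⁻¹ = 1 :=
    Matrix.mul_nonsing_inv _ (by simp [Matrix.det_fin_two_of]; norm_num)
  have hQunit : IsUnit (Matrix.blockDiagonal fun _ : Fin M => (!![1, 1; 1, -1] :
      Matrix (Fin 2) (Fin 2) ℝ)) := by
    rw [Matrix.isUnit_iff_isUnit_det, Matrix.det_blockDiagonal]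
    exact isUnit_iff_ne_zero.mpr (Finset.prod_ne_zero_iff.mpr fun i _ => by
      simp [Matrix.det_fin_two_of]; norm_num)
  have hQinv : (Matrix.blockDiagonal fun _ : Fin M => (!![1, 1; 1, -1] :
        Matrix (Fin 2) (Fin 2) ℝ))⁻¹
      = Matrix.blockDiagonal fun _ : Fin M => (!![1, 1; 1, -1] : Matrix (Fin 2) (Fin 2) ℝ)⁻¹ := by
    apply Matrix.inv_eq_right_inv
    rw [← Matrix.blockDiagonal_mul]
    simp only [hPP]
    exact Matrix.blockDiagonal_one
  have hdiag1 : bdiag (fun i => c i • Kmat)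
      = (Matrix.blockDiagonal fun _ : Fin M => (!![1, 1; 1, -1] : Matrix (Fin 2) (Fin 2) ℝ))
        * Matrix.diagonal (fun pi : Idx M => ![c pi.2, -c pi.2] pi.1)
        * (Matrix.blockDiagonal fun _ : Fin M => (!![1, 1; 1, -1] :
            Matrix (Fin 2) (Fin 2) ℝ))⁻¹ := by
    rw [hQinv, ← Matrix.blockDiagonal_diagonal (fun k => ![c k, -c k]),
      ← Matrix.blockDiagonal_mul, ← Matrix.blockDiagonal_mul]
    unfold bdiag
    refine congrArg _ ?_
    funext i
    exact conjP (c i)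
  rw [hdiag1, Matrix.exp_conj _ _ hQunit, Matrix.exp_diagonal]
  have hde : exp (fun pi : Idx M => ![c pi.2, -c pi.2] pi.1)
      = fun pi : Idx M => ![Real.exp (c pi.2), Real.exp (-c pi.2)] pi.1 := by
    rw [Pi.exp_def]
    funext pi
    obtain ⟨p, i⟩ := pi
    fin_cases p <;> simp [← Real.exp_eq_exp_ℝ]
  rw [hde, hQinv, ← Matrix.blockDiagonal_diagonal (fun k => ![Real.exp (c k), Real.exp (-c k)]),
    ← Matrix.blockDiagonal_mul, ← Matrix.blockDiagonal_mul]
  unfold bdiag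
  refine congrArg _ ?_
  funext i
  exact conjP2 (c i)

lemma exp_artanh {r : ℝ} (h : |r| < 1) :
    Real.exp (artanh r) = Real.sqrt (1 + r) / Real.sqrt (1 - r) := by
  have h1 : 0 < 1 + r := by cases abs_lt.mp h; linarith
  have h2 : 0 < 1 - r := by cases abs_lt.mp h; linarith
  have hy : 0 < (1 + r) / (1 - r) := div_pos h1 h2
  rw [artanh, show Real.log ((1+r)/(1-r)) / 2 = Real.log ((1+r)/(1-r)) * (1/2 : ℝ) by ring,
    ← Real.rpow_def_of_pos hy, ← Real.sqrt_eq_rpow, Real.sqrt_div h1.le]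

lemma cosh_artanh {r : ℝ} (h : |r| < 1) :
    Real.cosh (artanh r) = 1 / Real.sqrt (1 - r ^ 2) := by
  have h1 : 0 < 1 + r := by cases abs_lt.mp h; linarith
  have h2 : 0 < 1 - r := by cases abs_lt.mp h; linarith
  have hs1 : 0 < Real.sqrt (1 + r) := Real.sqrt_pos.mpr h1
  have hs2 : 0 < Real.sqrt (1 - r) := Real.sqrt_pos.mpr h2
  have hq1 : Real.sqrt (1 + r) ^ 2 = 1 + r := Real.sq_sqrt h1.le
  have hq2 : Real.sqrt (1 - r) ^ 2 = 1 - r := Real.sq_sqrt h2.le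
  have hq : Real.sqrt (1 - r ^ 2) = Real.sqrt (1 + r) * Real.sqrt (1 - r) := by
    rw [show 1 - r ^ 2 = (1 + r) * (1 - r) by ring, Real.sqrt_mul h1.le]
  rw [Real.cosh_eq, exp_artanh h, Real.exp_neg, exp_artanh h, hq]
  field_simp
  nlinarith [hq1, hq2]

lemma sinh_artanh {r : ℝ} (h : |r| < 1) :
    Real.sinh (artanh r) = r / Real.sqrt (1 - r ^ 2) := by
  have h1 : 0 < 1 + r := by cases abs_lt.mp h; linarith
  have h2 : 0 < 1 - r := by cases abs_lt.mp h; linarith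
  have hs1 : 0 < Real.sqrt (1 + r) := Real.sqrt_pos.mpr h1
  have hs2 : 0 < Real.sqrt (1 - r) := Real.sqrt_pos.mpr h2
  have hq1 : Real.sqrt (1 + r) ^ 2 = 1 + r := Real.sq_sqrt h1.le
  have hq2 : Real.sqrt (1 - r) ^ 2 = 1 - r := Real.sq_sqrt h2.le
  have hq : Real.sqrt (1 - r ^ 2) = Real.sqrt (1 + r) * Real.sqrt (1 - r) := by
    rw [show 1 - r ^ 2 = (1 + r) * (1 - r) by ring, Real.sqrt_mul h1.le]
  rw [Real.sinh_eq, exp_artanh h, Real.exp_neg, exp_artanh h, hq]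
  field_simp
  nlinarith [hq1, hq2]

lemma hyp_aux (a r q : ℝ) (hq : q ≠ 0) (hq2 : q ^ 2 = 1 - r ^ 2) :
    1 / q * a + -(r / q * (r * a)) = a * q ∧ -(r / q * a) + 1 / q * (r * a) = 0 := by
  constructor
  · field_simp
    linear_combination (-a) * hq2
  · field_simp
    ring

lemma hyp_block (u : Fin 2 → ℝ) (h : |u 1| < |u 0|) (l : ℝ) (hl : l ≠ 0) :
    (Hyp (-(artanh (u 1 / u 0) / l * l))).mulVec u
      = (Real.sign (u 0) * Real.sqrt (u 0 ^ 2 - u 1 ^ 2)) • e1 := by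
  have ha : u 0 ≠ 0 := by
    intro h0; rw [h0, abs_zero] at h; exact (abs_nonneg _).not_gt h
  have hrlt : |u 1 / u 0| < 1 := by
    rw [abs_div, div_lt_one (abs_pos.mpr ha)]; exact h
  have hq2 : Real.sqrt (1 - (u 1 / u 0) ^ 2) ^ 2 = 1 - (u 1 / u 0) ^ 2 := by
    apply Real.sq_sqrt; nlinarith [abs_lt.mp hrlt, sq_nonneg (u 1 / u 0)]
  have hqpos : 0 < Real.sqrt (1 - (u 1 / u 0) ^ 2) := by
    apply Real.sqrt_pos.mpr; nlinarith [abs_lt.mp hrlt, sq_nonneg (u 1 / u 0)]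
  rw [div_mul_cancel₀ _ hl]
  have hb : u 1 = (u 1 / u 0) * u 0 := by field_simp
  have habs : Real.sqrt (u 0 ^ 2 - u 1 ^ 2) = |u 0| * Real.sqrt (1 - (u 1 / u 0) ^ 2) := by
    rw [show u 0 ^2 - u 1 ^2 = u 0 ^2 * (1 - (u 1 / u 0)^2) by field_simp,
      Real.sqrt_mul (sq_nonneg (u 0)), Real.sqrt_sq_eq_abs]
  have hsign : Real.sign (u 0) * |u 0| = u 0 := by
    rcases lt_trichotomy (u 0) 0 with h' | h' | h'
    · rw [Real.sign_of_neg h', abs_of_neg h']; ring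
    · exact absurd h' ha
    · rw [Real.sign_of_pos h', abs_of_pos h']; ring
  have hcosh := cosh_artanh hrlt
  have hsinh := sinh_artanh hrlt
  obtain ⟨key1, key2⟩ := hyp_aux (u 0) (u 1 / u 0) (Real.sqrt (1 - (u 1 / u 0) ^ 2))
    hqpos.ne' hq2
  rw [← hb] at key1 key2
  funext p
  fin_cases p <;>
    simp [Hyp, Matrix.mulVec, dotProduct, Fin.sum_univ_two, e1, Matrix.vecHead, Matrix.vecTail,
      Real.cosh_neg, Real.sinh_neg, hcosh, hsinh, habs, ← mul_assoc, hsign, ← one_div]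
  · rw [key1]
  · rw [← key2]

lemma bdiag_mulVec {M : ℕ} (C : Fin M → Matrix (Fin 2) (Fin 2) ℝ) (v : Idx M → ℝ)
    (p : Fin 2) (i : Fin M) :
    (bdiag C).mulVec v (p, i) = (C i).mulVec (blk v i) p := by
  simp [bdiag, Matrix.mulVec, dotProduct, Matrix.blockDiagonal_apply, blk,
    Fintype.sum_prod_type, ite_mul, Finset.sum_ite_eq, Finset.sum_ite_eq']

/-- **Hyperbolic invariant functions.** If `Ψ(exp(sL)x) = Ψ(x)` for all
`s, x`, with `L = A⁻¹(⊕ᵢ λᵢK)A`, then there is `φ` with `Ψ(x) = φ(invRep_h(x))` for every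
`x` whose first block `v₁` of `v = Ax` satisfies `|v_{1,2}| < |v_{1,1}|`. -/
theorem stmt11 (M : ℕ) [NeZero M] (m : ℕ)
    (A : Matrix (Idx M) (Idx M) ℝ) (hA : IsUnit A)
    (lam : Fin M → ℝ) (hlam : lam 0 ≠ 0)
    (L : Matrix (Idx M) (Idx M) ℝ)
    (hL : L = A⁻¹ * bdiag (fun i => lam i • Kmat) * A)
    (Ψ : (Idx M → ℝ) → (Fin m → ℝ))
    (hΨ : ∀ (s : ℝ) (x : Idx M → ℝ), Ψ ((exp (s • L)).mulVec x) = Ψ x) :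
    ∃ φ : (Idx M → ℝ) → (Fin m → ℝ),
      ∀ x : Idx M → ℝ, |blk (A.mulVec x) 0 1| < |blk (A.mulVec x) 0 0| →
        Ψ x = φ (invRepH A lam x) := by
  refine ⟨fun y => Ψ (A⁻¹.mulVec y), fun x hx => ?_⟩
  set t₀ := t0H A lam x with ht₀
  have hexp : exp ((-t₀) • L) = A⁻¹ * bdiag (fun i => Hyp (-t₀ * lam i)) * A := by
    have h1 : (-t₀) • L = A⁻¹ * ((-t₀) • bdiag (fun i => lam i • Kmat)) * A := by
      rw [hL]; rw [Matrix.mul_smul, Matrix.smul_mul]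
    rw [h1, Matrix.exp_conj' _ _ hA]
    congr 1
    congr 1
    have h2 : (-t₀) • bdiag (fun i => lam i • Kmat)
        = bdiag (fun i => (-t₀ * lam i) • Kmat) := by
      unfold bdiag
      rw [← Matrix.blockDiagonal_smul]
      refine congrArg Matrix.blockDiagonal ?_
      funext j
      rw [Pi.smul_apply, smul_smul]
    rw [h2, exp_bdiagK]
  have key : invRepH A lam x = (bdiag (fun i => Hyp (-t₀ * lam i))).mulVec (A.mulVec x) := by
    funext pi
    obtain ⟨p, i⟩ := pi
    rw [bdiag_mulVec]
    by_cases hi : i = 0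
    · subst hi
      show (invRepH A lam x) (p, 0) = _
      unfold invRepH cat
      simp only [if_pos rfl]
      have hbl := hyp_block (blk (A.mulVec x) 0) hx (lam 0) hlam
      rw [show (-t₀ * lam 0) = -(artanh (blk (A.mulVec x) 0 1 / blk (A.mulVec x) 0 0) / lam 0
        * lam 0) by rw [ht₀]; unfold t0H; ring, hbl]
      simp
    · show (invRepH A lam x) (p, i) = _
      unfold invRepH cat
      simp only [if_neg hi]
      rw [show (-t₀ * lam i) = -(t₀ * lam i) by ring]
  have hps := hΨ (-t₀) x
  rw [hexp] at hps
  rw [← hps]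
  simp only [← Matrix.mulVec_mulVec, key]
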